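/- Let Γ be a finite nonempty subset of ℤⁿ (a set of characters of a torus G = (𝔾_m)ⁿ), let L_Γ be the subgroup of ℤⁿ generated by Γ, let V_Γ = L_Γ ⊗ ℝ ⊆ ℝⁿ, and let conv(Γ) be the convex hull of Γ in ℝⁿ. Then the following are equivalent: (i) 0 is an interior point of conv(Γ) regarded as a subset of V_Γ; (ii) for every λ ∈ ℤⁿ (viewed via the standard pairing ⟨λ,χ⟩), either ⟨λ,χ⟩ = 0 for all χ ∈ Γ, or there exist χ₁, χ₂ ∈ Γ with ⟨λ,χ₁⟩ > 0 and ⟨λ,χ₂⟩ < 0. -/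

import Mathlib

open Finset Matrix

theorem myFarkas {F : Type*} [Field F] [LinearOrder F] [IsStrictOrderedRing F] {n : ℕ} :
    ∀ (m : ℕ) (v : Fin m → (Fin n → F)) (b : Fin n → F),
      (∃ c : Fin m → F, (∀ j, 0 ≤ c j) ∧ ∑ j, c j • v j = b) ∨
      (∃ l : Fin n → F, (∀ j, 0 ≤ l ⬝ᵥ v j) ∧ l ⬝ᵥ b < 0) := by
  intro m
  induction m with
  | zero =>
    intro v b
    by_cases hb : b = 0
    · exact Or.inl ⟨0, fun j => le_refl _, by simp [hb]⟩
    · right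
      refine ⟨-b, fun j => Fin.elim0 j, ?_⟩
      have hpos : 0 < b ⬝ᵥ b := by
        obtain ⟨i, hi⟩ := Function.ne_iff.1 hb
        exact Finset.sum_pos' (fun i _ => mul_self_nonneg _)
          ⟨i, Finset.mem_univ i, mul_self_pos.2 hi⟩
      simpa [neg_dotProduct] using neg_neg_iff_pos.2 hpos
  | succ m ih =>
    intro v b
    set a0 : Fin n → F := v 0 with ha0
    set t : Fin m → (Fin n → F) := fun j => v j.succ with ht
    by_cases h0 : ∃ l : Fin n → F, (∀ j, 0 ≤ l ⬝ᵥ t j) ∧ l ⬝ᵥ b < 0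
    · obtain ⟨l, hl, hlb⟩ := h0
      by_cases hla : 0 ≤ l ⬝ᵥ a0
      · right
        refine ⟨l, fun j => ?_, hlb⟩
        refine Fin.cases hla (fun j => hl j) j
      · push_neg at hla
        have hD : l ⬝ᵥ a0 ≠ 0 := ne_of_lt hla
        set P : (Fin n → F) → (Fin n → F) := fun x => x - ((l ⬝ᵥ x) / (l ⬝ᵥ a0)) • a0 with hP
        rcases ih (fun j => P (t j)) (P b) with ⟨c, hc, hsum⟩ | ⟨μ, hμ, hμb⟩
        · -- cone case
          left
          have hexp : ∑ j, c j • P (t j)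
              = (∑ j, c j • t j) - (∑ j, c j * ((l ⬝ᵥ t j) / (l ⬝ᵥ a0))) • a0 := by
            rw [Finset.sum_smul]
            rw [← Finset.sum_sub_distrib]
            refine Finset.sum_congr rfl fun j _ => ?_
            rw [hP]
            rw [smul_sub, smul_smul]
          set q : F := ((l ⬝ᵥ b) - ∑ j, c j * (l ⬝ᵥ t j)) / (l ⬝ᵥ a0) with hqdef
          have hqpos : 0 < q := by
            apply div_pos_of_neg_of_neg _ hla
            have : 0 ≤ ∑ j, c j * (l ⬝ᵥ t j) :=
              Finset.sum_nonneg fun j _ => mul_nonneg (hc j) (hl j)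
            linarith
          have hq : q = (l ⬝ᵥ b) / (l ⬝ᵥ a0) - ∑ j, c j * ((l ⬝ᵥ t j) / (l ⬝ᵥ a0)) := by
            rw [hqdef, sub_div, Finset.sum_div]
            congr 1
            exact Finset.sum_congr rfl fun j _ => (mul_div_assoc _ _ _)
          refine ⟨Fin.cases q c, fun j => ?_, ?_⟩
          · refine Fin.cases (le_of_lt hqpos) (fun j => hc j) j
          · rw [Fin.sum_univ_succ]
            simp only [Fin.cases_zero, Fin.cases_succ]
            have hsum' : (∑ j, c j • t j)
                = P b + (∑ j, c j * ((l ⬝ᵥ t j) / (l ⬝ᵥ a0))) • a0 := by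
              rw [← hsum, hexp]; abel
            rw [hsum', hP]
            rw [hq]
            module
        · -- functional case
          right
          set ν : Fin n → F := μ - ((μ ⬝ᵥ a0) / (l ⬝ᵥ a0)) • l with hν
          have key : ∀ x, ν ⬝ᵥ x = μ ⬝ᵥ P x := by
            intro x
            rw [hν, hP, sub_dotProduct, smul_dotProduct, dotProduct_sub, dotProduct_smul,
              smul_eq_mul, smul_eq_mul]
            ring
          have hν0 : ν ⬝ᵥ a0 = 0 := by
            rw [hν, sub_dotProduct, smul_dotProduct, smul_eq_mul, div_mul_cancel₀ _ hD, sub_self]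
          refine ⟨ν, fun j => ?_, by rw [key]; exact hμb⟩
          refine Fin.cases (le_of_eq hν0.symm) (fun j => ?_) j
          rw [show v j.succ = t j from rfl, key]
          exact hμ j
    · -- no functional for the tail: tail cone contains b
      push_neg at h0
      rcases ih t b with ⟨c, hc, hsum⟩ | ⟨l, hl, hlb⟩
      · left
        refine ⟨Fin.cases 0 c, fun j => ?_, ?_⟩
        · refine Fin.cases le_rfl (fun j => hc j) j
        · rw [Fin.sum_univ_succ]
          simp [hsum]; exact hsum
      · exact absurd (h0 l hl) (not_le.2 hlb)

theorem ratScale {n : ℕ} (l : Fin n → ℚ) :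
    ∃ (N : ℕ) (μ : Fin n → ℤ), 0 < N ∧ ∀ i, (μ i : ℚ) = N * l i := by
  refine ⟨∏ i, (l i).den, fun i => (l i).num * ((∏ i, (l i).den) / (l i).den : ℕ), ?_, ?_⟩
  · exact Finset.prod_pos fun i _ => (l i).pos
  · intro i
    have hdvd : (l i).den ∣ ∏ i, (l i).den := Finset.dvd_prod_of_mem _ (Finset.mem_univ i)
    have hden : ((l i).den : ℚ) ≠ 0 := Nat.cast_ne_zero.2 (l i).den_nz
    have hcd : (((∏ i, (l i).den) / (l i).den : ℕ) : ℚ) = ((∏ i, (l i).den : ℕ) : ℚ) / ((l i).den : ℚ) := by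
      rw [Nat.cast_div hdvd hden]
    rw [Int.cast_mul, Int.cast_natCast, hcd]
    conv_rhs => rw [← Rat.num_div_den (l i)]
    field_simp

theorem stiemke {n : ℕ} (Γ : Finset (Fin n → ℤ))
    (h : ∀ l : Fin n → ℤ,
        (∀ χ ∈ Γ, ∑ i, l i * χ i = 0) ∨
          ((∃ χ₁ ∈ Γ, 0 < ∑ i, l i * χ₁ i) ∧ (∃ χ₂ ∈ Γ, ∑ i, l i * χ₂ i < 0))) :
    ∃ d : (Fin n → ℤ) → ℚ, (∀ χ ∈ Γ, 0 < d χ) ∧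
      ∑ χ ∈ Γ, d χ • (fun i => (χ i : ℚ)) = 0 := by
  classical
  set castQ : (Fin n → ℤ) → (Fin n → ℚ) := fun χ i => (χ i : ℚ) with hcastQ
  set e : ↥Γ ≃ Fin Γ.card := Γ.equivFin with he
  set v : Fin Γ.card → (Fin n → ℚ) := fun j => castQ ((e.symm j) : Fin n → ℤ) with hv
  set b : Fin n → ℚ := -∑ χ ∈ Γ, castQ χ with hb
  rcases myFarkas Γ.card v b with ⟨c, hc, hsum⟩ | ⟨l, hl, hlb⟩
  · refine ⟨fun χ => if hχ : χ ∈ Γ then c (e ⟨χ, hχ⟩) + 1 else 1, ?_, ?_⟩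
    · intro χ hχ
      simp only [dif_pos hχ]
      have := hc (e ⟨χ, hχ⟩); linarith
    · rw [← Finset.sum_coe_sort Γ (fun χ => (if hχ : χ ∈ Γ then c (e ⟨χ, hχ⟩) + 1 else 1) • castQ χ)]
      have : ∀ x : ↥Γ, (if hχ : (x : Fin n → ℤ) ∈ Γ then c (e ⟨x, hχ⟩) + 1 else 1) • castQ ↑x
          = c (e x) • castQ ↑x + castQ ↑x := by
        intro x
        rw [dif_pos x.2, add_smul, one_smul]
      rw [Finset.sum_congr rfl fun x _ => this x, Finset.sum_add_distrib]
      have h1 : ∑ x : ↥Γ, c (e x) • castQ ↑x = ∑ j, c j • v j := by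
        rw [← Equiv.sum_comp e (fun j => c j • v j)]
        refine Finset.sum_congr rfl fun x _ => ?_
        simp [hv]
      have h2 : ∑ x : ↥Γ, castQ ↑x = ∑ χ ∈ Γ, castQ χ := Finset.sum_coe_sort Γ castQ
      rw [h1, h2, hsum, hb, neg_add_cancel]
  · -- functional case: contradiction with h
    have hge : ∀ χ ∈ Γ, 0 ≤ l ⬝ᵥ castQ χ := by
      intro χ hχ
      have := hl (e ⟨χ, hχ⟩)
      simpa [hv] using this
    have hbsum : l ⬝ᵥ b = -∑ χ ∈ Γ, l ⬝ᵥ castQ χ := by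
      rw [hb, dotProduct_neg]
      congr 1
      simp only [dotProduct, Finset.sum_apply, Finset.mul_sum]
      rw [Finset.sum_comm]
    have hpos : 0 < ∑ χ ∈ Γ, l ⬝ᵥ castQ χ := by
      rw [hbsum] at hlb; linarith
    have hex : ∃ χ₀ ∈ Γ, 0 < l ⬝ᵥ castQ χ₀ := by
      by_contra hcon
      push_neg at hcon
      exact absurd (Finset.sum_nonpos hcon) (not_le.2 hpos)
    obtain ⟨χ₀, hχ₀, hχ₀pos⟩ := hex
    obtain ⟨N, μ, hN, hμ⟩ := ratScale l
    have hkey : ∀ χ : Fin n → ℤ, ((∑ i, μ i * χ i : ℤ) : ℚ) = N * (l ⬝ᵥ castQ χ) := by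
      intro χ
      push_cast
      rw [dotProduct, Finset.mul_sum]
      refine Finset.sum_congr rfl fun i _ => ?_
      rw [hμ i]; ring
    have hNpos : (0 : ℚ) < N := by exact_mod_cast hN
    rcases h μ with hzero | ⟨_, ⟨χ₂, hχ₂, hneg⟩⟩
    · have := hzero χ₀ hχ₀
      have : ((∑ i, μ i * χ₀ i : ℤ) : ℚ) = 0 := by exact_mod_cast this
      rw [hkey] at this
      nlinarith
    · have : ((∑ i, μ i * χ₂ i : ℤ) : ℚ) < 0 := by exact_mod_cast hneg
      rw [hkey] at this
      nlinarith [hge χ₂ hχ₂]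


/- STATEMENT 3: for a finite nonempty set `Γ ⊆ ℤⁿ` of characters, `0` is an
interior point of `conv(Γ)` viewed inside the real span `V_Γ` of `Γ` (with its
subspace topology) if and only if every `λ ∈ ℤⁿ` either pairs to zero with all
of `Γ`, or pairs strictly positively with some `χ₁ ∈ Γ` and strictly negatively
with some `χ₂ ∈ Γ`. -/
theorem stmt3 (n : ℕ) (Γ : Finset (Fin n → ℤ)) (hΓ : Γ.Nonempty) :
    ((0 : Submodule.span ℝ ((fun χ : Fin n → ℤ => fun i => (χ i : ℝ)) '' (Γ : Set (Fin n → ℤ)))) ∈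
        interior {v : Submodule.span ℝ
            ((fun χ : Fin n → ℤ => fun i => (χ i : ℝ)) '' (Γ : Set (Fin n → ℤ))) |
          (v : Fin n → ℝ) ∈
            convexHull ℝ ((fun χ : Fin n → ℤ => fun i => (χ i : ℝ)) '' (Γ : Set (Fin n → ℤ)))}) ↔
      ∀ l : Fin n → ℤ,
        (∀ χ ∈ Γ, ∑ i, l i * χ i = 0) ∨
          ((∃ χ₁ ∈ Γ, 0 < ∑ i, l i * χ₁ i) ∧ (∃ χ₂ ∈ Γ, ∑ i, l i * χ₂ i < 0)) := by
  classical
  set ca : (Fin n → ℤ) → (Fin n → ℝ) := fun χ => fun i => (χ i : ℝ) with hca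
  set Γ' : Set (Fin n → ℝ) := ca '' (Γ : Set (Fin n → ℤ)) with hΓ'
  set V : Submodule ℝ (Fin n → ℝ) := Submodule.span ℝ Γ' with hV
  set S : Set ↥V := {v : ↥V | (v : Fin n → ℝ) ∈ convexHull ℝ Γ'} with hS
  constructor
  · -- interior ⇒ combinatorial condition
    intro h0
    have key : ∀ l : Fin n → ℤ, (∀ χ ∈ Γ, 0 ≤ ∑ i, l i * χ i) →
        ∀ χ ∈ Γ, ∑ i, l i * χ i = 0 := by
      intro l hge χ₀ hχ₀
      by_contra hne
      have hpos : 0 < ∑ i, l i * χ₀ i := lt_of_le_of_ne (hge χ₀ hχ₀) (Ne.symm hne)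
      set f : (Fin n → ℝ) → ℝ := fun x => ∑ i, (l i : ℝ) * x i with hf
      have hlin : IsLinearMap ℝ f := by
        constructor
        · intro x y
          simp only [hf, Pi.add_apply, mul_add, Finset.sum_add_distrib]
        · intro c x
          simp only [hf, Pi.smul_apply, smul_eq_mul, Finset.mul_sum]
          exact Finset.sum_congr rfl fun i _ => by ring
      have hconv : convexHull ℝ Γ' ⊆ {x | 0 ≤ f x} := by
        apply convexHull_min _ (convex_halfSpace_ge hlin 0)
        rintro x ⟨χ, hχ, rfl⟩
        show (0 : ℝ) ≤ ∑ i, (l i : ℝ) * (χ i : ℝ)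
        have := hge χ hχ
        exact_mod_cast this
      -- pick a small negative multiple of χ₀ inside the ball
      rw [mem_interior_iff_mem_nhds, Metric.mem_nhds_iff] at h0
      obtain ⟨ε, hε, hball⟩ := h0
      have hχ₀V : ca χ₀ ∈ V := Submodule.subset_span (Set.mem_image_of_mem ca hχ₀)
      set z : ↥V := ⟨ca χ₀, hχ₀V⟩ with hz
      have hznorm : (0 : ℝ) < ‖z‖ + 1 := by positivity
      set r : ℝ := ε / (2 * (‖z‖ + 1)) with hr
      have hrpos : 0 < r := by positivity
      have hmem : (-r) • z ∈ Metric.ball (0 : ↥V) ε := by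
        rw [Metric.mem_ball, dist_zero_right]
        have hnc : ‖((-r) • z : ↥V)‖ = ‖(-r) • (ca χ₀)‖ := rfl
        rw [hnc, norm_smul, norm_neg, Real.norm_of_nonneg hrpos.le]
        have hzn : ‖z‖ = ‖ca χ₀‖ := rfl
        have h2 : r * ‖ca χ₀‖ < r * (‖z‖ + 1) := by rw [hzn] at *; nlinarith
        have h3 : r * (‖z‖ + 1) = ε / 2 := by
          rw [hr]; field_simp
        linarith
      have hvS : ((-r) • z : ↥V) ∈ S := hball hmem
      have h4 : 0 ≤ f (((-r) • z : ↥V) : Fin n → ℝ) := hconv hvS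
      have h5 : (((-r) • z : ↥V) : Fin n → ℝ) = (-r) • (ca χ₀) := rfl
      rw [h5, hlin.map_smul, smul_eq_mul] at h4
      have h6 : 0 < f (ca χ₀) := by
        show (0 : ℝ) < ∑ i, (l i : ℝ) * (χ₀ i : ℝ)
        exact_mod_cast hpos
      nlinarith
    intro l
    by_cases hneg : ∃ χ₂ ∈ Γ, ∑ i, l i * χ₂ i < 0
    · by_cases hpos : ∃ χ₁ ∈ Γ, 0 < ∑ i, l i * χ₁ i
      · exact Or.inr ⟨hpos, hneg⟩
      · push_neg at hpos
        left
        intro χ hχ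
        have hge : ∀ χ ∈ Γ, 0 ≤ ∑ i, (-l) i * χ i := by
          intro χ' hχ'
          have h1 : ∑ i, (-l) i * χ' i = -∑ i, l i * χ' i := by
            rw [← Finset.sum_neg_distrib]
            exact Finset.sum_congr rfl fun i _ => by simp [neg_mul]
          rw [h1]
          linarith [hpos χ' hχ']
        have := key (-l) hge χ hχ
        have h1 : ∑ i, (-l) i * χ i = -∑ i, l i * χ i := by
          rw [← Finset.sum_neg_distrib]
          exact Finset.sum_congr rfl fun i _ => by simp [neg_mul]
        rw [h1] at this
        linarith
    · push_neg at hneg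
      exact Or.inl (key l hneg)
  · -- combinatorial condition ⇒ interior
    intro h
    obtain ⟨d, hdpos, hdsum⟩ := stiemke Γ h
    set c : (Fin n → ℤ) → ℝ := fun χ => ((d χ : ℚ) : ℝ) with hc
    have hcpos : ∀ χ ∈ Γ, 0 < c χ := by
      intro χ hχ
      simp only [hc]
      exact_mod_cast hdpos χ hχ
    have hcsum : ∑ χ ∈ Γ, c χ • ca χ = 0 := by
      funext i
      have hQ : ∑ χ ∈ Γ, d χ * ((χ i : ℤ) : ℚ) = 0 := by
        have := congrFun hdsum i
        simpa [Finset.sum_apply] using this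
      have := congrArg (fun q : ℚ => (q : ℝ)) hQ
      push_cast at this
      simpa [Finset.sum_apply] using this
    -- the linear map from coefficient space
    haveI : Nonempty ↥Γ := ⟨⟨hΓ.choose, hΓ.choose_spec⟩⟩
    set T₀ : (↥Γ → ℝ) →ₗ[ℝ] (Fin n → ℝ) :=
      Fintype.linearCombination ℝ (fun x : ↥Γ => ca ↑x) with hT₀
    have hT₀apply : ∀ a : ↥Γ → ℝ, T₀ a = ∑ x : ↥Γ, a x • ca ↑x := fun a => rfl
    have hT₀mem : ∀ a : ↥Γ → ℝ, T₀ a ∈ V := by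
      intro a
      rw [hT₀apply]
      exact Submodule.sum_mem _ fun x _ => Submodule.smul_mem _ _
        (Submodule.subset_span (Set.mem_image_of_mem ca x.2))
    set T : (↥Γ → ℝ) →ₗ[ℝ] ↥V := T₀.codRestrict V hT₀mem with hT
    have hTsurj : Function.Surjective T := by
      intro y
      have hy : (y : Fin n → ℝ) ∈ LinearMap.range T₀ := by
        rw [hT₀, Fintype.range_linearCombination]
        have : Set.range (fun x : ↥Γ => ca ↑x) = Γ' := by
          rw [hΓ', Set.image_eq_range]
          rfl
        rw [this]
        exact y.2
      obtain ⟨a, ha⟩ := hy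
      exact ⟨a, Subtype.ext ha⟩
    have hTopen : IsOpenMap T := LinearMap.isOpenMap_of_finiteDimensional T hTsurj
    set U : Set (↥Γ → ℝ) := {a | ∀ x, 0 < a x} ∩ {a | ∑ x, a x < 1} with hU
    have hUopen : IsOpen U := by
      apply IsOpen.inter
      · have : {a : ↥Γ → ℝ | ∀ x, 0 < a x} = ⋂ x, {a : ↥Γ → ℝ | 0 < a x} := by
          ext a; simp [Set.mem_iInter]
        rw [this]
        exact isOpen_iInter_of_finite fun x =>
          isOpen_lt continuous_const (continuous_apply x)
      · exact isOpen_lt (by fun_prop) continuous_const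
    set S0 : ℝ := ∑ x : ↥Γ, c ↑x with hS0
    have hS0pos : 0 < S0 :=
      Finset.sum_pos (fun x _ => hcpos ↑x x.2) Finset.univ_nonempty
    have hsum0 : ∑ x : ↥Γ, c ↑x • ca ↑x = 0 := by
      rw [Finset.sum_coe_sort Γ (fun χ => c χ • ca χ)]
      exact hcsum
    set a₀ : ↥Γ → ℝ := fun x => c ↑x / (2 * S0) with ha₀
    have ha₀U : a₀ ∈ U := by
      constructor
      · intro x
        exact div_pos (hcpos ↑x x.2) (by linarith)
      · show (∑ x : ↥Γ, c ↑x / (2 * S0)) < 1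
        rw [← Finset.sum_div]
        rw [div_lt_one (by linarith)]
        linarith
    have hTa₀ : T a₀ = 0 := by
      apply Subtype.ext
      show T₀ a₀ = 0
      rw [hT₀apply]
      have : ∀ x : ↥Γ, a₀ x • ca ↑x = (2 * S0)⁻¹ • (c ↑x • ca ↑x) := by
        intro x
        rw [smul_smul]
        congr 1
        simp only [ha₀]
        rw [div_eq_inv_mul]
      rw [Finset.sum_congr rfl fun x _ => this x, ← Finset.smul_sum, hsum0, smul_zero]
    have hTU : T '' U ⊆ S := by
      rintro _ ⟨a, haU, rfl⟩
      show (T a : Fin n → ℝ) ∈ convexHull ℝ Γ'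
      have hTa : (T a : Fin n → ℝ) = ∑ x : ↥Γ, a x • ca ↑x := hT₀apply a
      obtain ⟨hapos, hasum⟩ := haU
      have hapos' : ∀ x : ↥Γ, 0 < a x := hapos
      have hasum' : ∑ x : ↥Γ, a x < 1 := hasum
      set tv : ℝ := (1 - ∑ x : ↥Γ, a x) / S0 with htv
      have htvpos : 0 < tv := div_pos (by linarith) hS0pos
      set w : ↥Γ → ℝ := fun x => a x + tv * c ↑x with hw
      have hwpos : ∀ x : ↥Γ, 0 < w x := fun x =>
        add_pos (hapos' x) (mul_pos htvpos (hcpos ↑x x.2))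
      have hwsum : ∑ x : ↥Γ, w x = 1 := by
        simp only [hw, Finset.sum_add_distrib, ← Finset.mul_sum]
        rw [← hS0, htv]
        field_simp
        ring
      have hwrepr : ∑ x : ↥Γ, w x • ca ↑x = ∑ x : ↥Γ, a x • ca ↑x := by
        rw [hw]
        simp only [add_smul, Finset.sum_add_distrib]
        have : ∑ x : ↥Γ, (tv * c ↑x) • ca ↑x = tv • ∑ x : ↥Γ, c ↑x • ca ↑x := by
          rw [Finset.smul_sum]
          exact Finset.sum_congr rfl fun x _ => by rw [smul_smul]
        rw [this, hsum0, smul_zero, add_zero]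
      have hcm := Finset.centerMass_mem_convexHull (Finset.univ : Finset ↥Γ)
        (w := w) (z := fun x : ↥Γ => ca ↑x) (fun x _ => (hwpos x).le)
        (by rw [hwsum]; norm_num)
        (fun x _ => Set.mem_image_of_mem ca x.2)
      rw [Finset.centerMass_eq_of_sum_1 _ _ hwsum] at hcm
      rw [hTa, ← hwrepr]
      exact hcm
    have h0mem : (0 : ↥V) ∈ T '' U := ⟨a₀, ha₀U, hTa₀⟩
    exact interior_maximal hTU (hTopen U hUopen) h0mem
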